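/- arXiv:2208.14512 — 3 statements merged into one kernel-verified Lean document; each statement's English description precedes it below -/
import Mathlib

section
/- Let 1 < p₀ < p < p₀/(p₀−1), set r = p₀'/p = p₀/(p(p₀−1)) and s = p/p₀. Let u and ν be weights on ∂𝔻 such that u ∈ A_s(∂𝔻) ∩ RH_{r'}(∂𝔻) and ν^r ∈ A₂(∂𝔻). Then uν ∈ A_p(∂𝔻) and [uν]_{A_p} ≤ [u]_{A_s} · [u]_{RH_{r'}} · [ν^r]_{A₂}^{1/r}. -/
noncomputable section

open MeasureTheory Filter Set
open scoped ENNReal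

/-- Normalized arc length measure `dθ̃ = dθ/(2π)` on the unit circle, as a measure on `ℂ`. -/
def circleMeasure : Measure ℂ :=
  ENNReal.ofReal (2 * Real.pi)⁻¹ •
    ((volume.restrict (Set.Ioc (0 : ℝ) (2 * Real.pi))).map (circleMap 0 1))

/-- The open arc of the unit circle centered at `e^{ia}` of (half-)length `r`. -/
def arcSet (a r : ℝ) : Set ℂ := circleMap 0 1 '' Set.Ioo (a - r) (a + r)

/-- Average of a nonnegative quantity over a set, in `ℝ≥0∞`. -/
def eAvg (μ : Measure ℂ) (I : Set ℂ) (w : ℂ → ℝ) : ℝ≥0∞ :=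
  (∫⁻ z in I, ENNReal.ofReal (w z) ∂μ) / μ I

/-- The Muckenhoupt `A_p` characteristic of a weight on the unit circle. -/
def ApCircle (p : ℝ) (w : ℂ → ℝ) : ℝ≥0∞ :=
  ⨆ (a : ℝ) (r : ℝ) (_ : 0 < r ∧ r ≤ Real.pi),
    eAvg circleMeasure (arcSet a r) w *
      (eAvg circleMeasure (arcSet a r) fun z => w z ^ (-1 / (p - 1))) ^ (p - 1)

/-- The reverse Hölder `RH_q` characteristic of a weight on the unit circle. -/
def RHCircle (q : ℝ) (w : ℂ → ℝ) : ℝ≥0∞ :=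
  ⨆ (a : ℝ) (r : ℝ) (_ : 0 < r ∧ r ≤ Real.pi),
    (eAvg circleMeasure (arcSet a r) fun z => w z ^ q) ^ (1 / q) /
      eAvg circleMeasure (arcSet a r) w

/-- A weight: measurable and positive almost everywhere. -/
def IsWeightOn (μ : Measure ℂ) (w : ℂ → ℝ) : Prop :=
  Measurable w ∧ ∀ᵐ z ∂μ, 0 < w z

section ProductWeightAux

lemma circleMeasure_ne_top (I : Set ℂ) : circleMeasure I ≠ ⊤ := by
  have h1 : circleMeasure I ≤ circleMeasure Set.univ := measure_mono (Set.subset_univ I)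
  refine ne_top_of_le_ne_top ?_ h1
  rw [circleMeasure]
  simp only [Measure.smul_apply, smul_eq_mul]
  rw [Measure.map_apply (continuous_circleMap 0 1).measurable MeasurableSet.univ]
  simp only [Set.preimage_univ, Measure.restrict_apply, Set.univ_inter,
    MeasurableSet.univ, Real.volume_Ioc]
  exact ENNReal.mul_ne_top ENNReal.ofReal_ne_top ENNReal.ofReal_ne_top

lemma eAvg_congr_ae {μ : Measure ℂ} {I : Set ℂ} {f g : ℂ → ℝ}
    (h : ∀ᵐ z ∂μ, f z = g z) : eAvg μ I f = eAvg μ I g := by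
  unfold eAvg
  congr 1
  refine lintegral_congr_ae ((ae_restrict_of_ae h).mono fun z hz => by dsimp only; rw [hz])

lemma eAvg_ne_zero {μ : Measure ℂ} {I : Set ℂ} (hm : μ I ≠ 0) (hI : μ I ≠ ⊤)
    {f : ℂ → ℝ} (hf : Measurable f) (h0 : ∀ᵐ z ∂μ, 0 < f z) : eAvg μ I f ≠ 0 := by
  unfold eAvg
  rw [Ne, ENNReal.div_eq_zero_iff]
  rintro (h | h)
  · rw [lintegral_eq_zero_iff (show Measurable fun z => ENNReal.ofReal (f z) from ENNReal.measurable_ofReal.comp hf)] at h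
    have h2 : ∀ᵐ z ∂μ.restrict I, False := by
      filter_upwards [ae_restrict_of_ae h0, h] with z h1 h2
      simp only [Pi.zero_apply, ENNReal.ofReal_eq_zero] at h2
      linarith
    have h3 : μ.restrict I = 0 := by
      rw [← MeasureTheory.ae_eq_bot]
      exact Filter.eventually_false_iff_eq_bot.mp h2
    exact hm (Measure.restrict_eq_zero.mp h3)
  · exact hI h

lemma eAvg_mul_le {μ : Measure ℂ} {I : Set ℂ} (hI : μ I ≠ ⊤) {f g : ℂ → ℝ}
    (hf : Measurable f) (hg : Measurable g)
    (hf0 : ∀ᵐ z ∂μ, 0 < f z) (hg0 : ∀ᵐ z ∂μ, 0 < g z)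
    {a b : ℝ} (hab : a.HolderConjugate b) :
    eAvg μ I (fun z => f z * g z) ≤
      (eAvg μ I fun z => f z ^ a) ^ (1/a) * (eAvg μ I fun z => g z ^ b) ^ (1/b) := by
  by_cases hm : μ I = 0
  · unfold eAvg
    rw [Measure.restrict_eq_zero.mpr hm, lintegral_zero_measure, ENNReal.zero_div]
    exact zero_le
  · unfold eAvg
    have hFf : ∫⁻ z in I, ENNReal.ofReal (f z * g z) ∂μ
        = ∫⁻ z in I, ((fun z => ENNReal.ofReal (f z)) * fun z => ENNReal.ofReal (g z)) z ∂μ := by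
      refine lintegral_congr_ae ?_
      filter_upwards [ae_restrict_of_ae hf0] with z h1
      simp [ENNReal.ofReal_mul h1.le]
    have hFa : ∫⁻ z in I, ENNReal.ofReal (f z ^ a) ∂μ
        = ∫⁻ z in I, ENNReal.ofReal (f z) ^ a ∂μ := by
      refine lintegral_congr_ae ?_
      filter_upwards [ae_restrict_of_ae hf0] with z h1
      rw [ENNReal.ofReal_rpow_of_pos h1]
    have hGb : ∫⁻ z in I, ENNReal.ofReal (g z ^ b) ∂μ
        = ∫⁻ z in I, ENNReal.ofReal (g z) ^ b ∂μ := by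
      refine lintegral_congr_ae ?_
      filter_upwards [ae_restrict_of_ae hg0] with z h1
      rw [ENNReal.ofReal_rpow_of_pos h1]
    rw [hFf, hFa, hGb]
    have hH := ENNReal.lintegral_mul_le_Lp_mul_Lq (μ.restrict I) hab
      (ENNReal.measurable_ofReal.comp hf).aemeasurable
      (ENNReal.measurable_ofReal.comp hg).aemeasurable
    set A := ∫⁻ z in I, ENNReal.ofReal (f z) ^ a ∂μ with hA
    set B := ∫⁻ z in I, ENNReal.ofReal (g z) ^ b ∂μ with hB
    calc (∫⁻ z in I, ((fun z => ENNReal.ofReal (f z)) * fun z => ENNReal.ofReal (g z)) z ∂μ) / μ I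
        ≤ (A ^ (1/a) * B ^ (1/b)) / μ I := ENNReal.div_le_div_right hH _
      _ = (A / μ I) ^ (1/a) * (B / μ I) ^ (1/b) := by
          have h1a : (0:ℝ) ≤ 1/a := le_of_lt (one_div_pos.mpr hab.pos)
          have h1b : (0:ℝ) ≤ 1/b := le_of_lt (one_div_pos.mpr hab.symm.pos)
          have hminv : ((μ I) ^ (1/a))⁻¹ * ((μ I) ^ (1/b))⁻¹ = (μ I)⁻¹ := by
            rw [← ENNReal.inv_rpow, ← ENNReal.inv_rpow,
              ← ENNReal.rpow_add _ _ (ENNReal.inv_ne_zero.mpr hI) (ENNReal.inv_ne_top.mpr hm),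
              show 1/a + 1/b = 1 by rw [one_div, one_div]; exact hab.inv_add_inv_eq_one]
            exact ENNReal.rpow_one _
          rw [ENNReal.div_rpow_of_nonneg _ _ h1a, ENNReal.div_rpow_of_nonneg _ _ h1b,
            div_eq_mul_inv (A ^ (1/a)), div_eq_mul_inv (B ^ (1/b)),
            div_eq_mul_inv (A ^ (1/a) * B ^ (1/b)), mul_mul_mul_comm, hminv]

lemma key_arc {μ : Measure ℂ} {I : Set ℂ} (hIT : μ I ≠ ⊤) (hm : μ I ≠ 0)
    {u ν : ℂ → ℝ} (hu : Measurable u) (hν : Measurable ν)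
    (hu0 : ∀ᵐ z ∂μ, 0 < u z) (hν0 : ∀ᵐ z ∂μ, 0 < ν z)
    {p s q r α β : ℝ}
    (hqr : q.HolderConjugate r) (hαβ : α.HolderConjugate β)
    (hp1 : 1 < p) (hs1 : 1 < s)
    (id1 : (-1 / (p - 1)) * α = -1 / (s - 1))
    (id2 : (-1 / (p - 1)) * β = r * (-1 / ((2:ℝ) - 1)))
    (id3 : (1/α) * (p-1) = s - 1)
    (id4 : (1/β) * (p-1) = 1 / r)
    (hA0 : eAvg μ I u ≠ 0) (hAT : eAvg μ I u ≠ ⊤) :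
    eAvg μ I (fun z => u z * ν z) *
      (eAvg μ I fun z => (u z * ν z) ^ (-1 / (p - 1))) ^ (p - 1) ≤
    (eAvg μ I u * (eAvg μ I fun z => u z ^ (-1 / (s - 1))) ^ (s - 1)) *
      ((eAvg μ I fun z => u z ^ q) ^ (1 / q) / eAvg μ I u) *
      ((eAvg μ I fun z => ν z ^ r) *
        (eAvg μ I fun z => (ν z ^ r) ^ (-1 / ((2:ℝ) - 1))) ^ ((2:ℝ) - 1)) ^ (1 / r) := by
  set A := eAvg μ I u with hA
  set R := eAvg μ I fun z => u z ^ q with hR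
  set X := eAvg μ I fun z => u z ^ (-1 / (s - 1)) with hX
  set B := eAvg μ I fun z => ν z ^ r with hB
  set Y := eAvg μ I fun z => (ν z ^ r) ^ (-1 / ((2:ℝ) - 1)) with hY
  have hp1' : (0:ℝ) < p - 1 := by linarith
  -- Hölder for the first average
  have hold1 : eAvg μ I (fun z => u z * ν z) ≤ R ^ (1/q) * B ^ (1/r) :=
    eAvg_mul_le hIT hu hν hu0 hν0 hqr
  -- Hölder for the second average
  have congr0 : (eAvg μ I fun z => (u z * ν z) ^ (-1 / (p - 1)))
      = eAvg μ I fun z => (u z ^ (-1 / (p - 1))) * (ν z ^ (-1 / (p - 1))) := by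
    refine eAvg_congr_ae ?_
    filter_upwards [hu0, hν0] with z h1 h2
    exact Real.mul_rpow h1.le h2.le
  have hold2' : (eAvg μ I fun z => (u z ^ (-1 / (p - 1))) * (ν z ^ (-1 / (p - 1))))
      ≤ (eAvg μ I fun z => (u z ^ (-1 / (p - 1))) ^ α) ^ (1/α) *
        (eAvg μ I fun z => (ν z ^ (-1 / (p - 1))) ^ β) ^ (1/β) :=
    eAvg_mul_le hIT (hu.pow_const _) (hν.pow_const _)
      (hu0.mono fun z hz => Real.rpow_pos_of_pos hz _)
      (hν0.mono fun z hz => Real.rpow_pos_of_pos hz _) hαβ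
  have congrX : (eAvg μ I fun z => (u z ^ (-1 / (p - 1))) ^ α) = X := by
    rw [hX]
    refine eAvg_congr_ae ?_
    filter_upwards [hu0] with z hz
    rw [← Real.rpow_mul hz.le, id1]
  have congrY : (eAvg μ I fun z => (ν z ^ (-1 / (p - 1))) ^ β) = Y := by
    rw [hY]
    refine eAvg_congr_ae ?_
    filter_upwards [hν0] with z hz
    rw [← Real.rpow_mul hz.le, ← Real.rpow_mul hz.le, id2]
  have hold2 : (eAvg μ I fun z => (u z * ν z) ^ (-1 / (p - 1))) ≤ X ^ (1/α) * Y ^ (1/β) := by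
    rw [congr0]
    calc (eAvg μ I fun z => (u z ^ (-1 / (p - 1))) * (ν z ^ (-1 / (p - 1))))
        ≤ (eAvg μ I fun z => (u z ^ (-1 / (p - 1))) ^ α) ^ (1/α) *
          (eAvg μ I fun z => (ν z ^ (-1 / (p - 1))) ^ β) ^ (1/β) := hold2'
      _ = X ^ (1/α) * Y ^ (1/β) := by rw [congrX, congrY]
  -- combine
  calc eAvg μ I (fun z => u z * ν z) *
        (eAvg μ I fun z => (u z * ν z) ^ (-1 / (p - 1))) ^ (p - 1)
      ≤ (R ^ (1/q) * B ^ (1/r)) * (X ^ (1/α) * Y ^ (1/β)) ^ (p - 1) :=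
        mul_le_mul' hold1 (ENNReal.rpow_le_rpow hold2 hp1'.le)
    _ = (R ^ (1/q) * B ^ (1/r)) * (X ^ (s-1) * Y ^ (1/r)) := by
        rw [ENNReal.mul_rpow_of_nonneg _ _ hp1'.le, ← ENNReal.rpow_mul, ← ENNReal.rpow_mul,
          id3, id4]
    _ = (A * X ^ (s-1)) * (R ^ (1/q) / A) * (B ^ (1/r) * Y ^ (1/r)) := by
        rw [ENNReal.div_eq_inv_mul]
        calc R ^ (1/q) * B ^ (1/r) * (X ^ (s-1) * Y ^ (1/r))
            = (A * A⁻¹) * (R ^ (1/q) * X ^ (s-1) * (B ^ (1/r) * Y ^ (1/r))) := by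
              rw [ENNReal.mul_inv_cancel hA0 hAT, one_mul]; ring
          _ = A * X ^ (s-1) * (A⁻¹ * R ^ (1/q)) * (B ^ (1/r) * Y ^ (1/r)) := by ring
    _ = (A * X ^ (s-1)) * (R ^ (1/q) / A) * ((B * Y ^ ((2:ℝ)-1)) ^ (1/r)) := by
        congr 1
        rw [show ((2:ℝ) - 1) = 1 by norm_num, ENNReal.rpow_one,
          ENNReal.mul_rpow_of_nonneg _ _ (le_of_lt (one_div_pos.mpr (by linarith [hqr.symm.pos] : (0:ℝ) < r)))]

end ProductWeightAux

/-- Let `1 < p₀ < p < p₀/(p₀-1)`, `r = p₀/(p(p₀-1))`, `s = p/p₀`.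
If `u ∈ A_s(∂𝔻) ∩ RH_{r'}(∂𝔻)` and `ν^r ∈ A₂(∂𝔻)`, then `uν ∈ A_p(∂𝔻)` and
`[uν]_{A_p} ≤ [u]_{A_s} · [u]_{RH_{r'}} · [ν^r]_{A₂}^{1/r}`. -/
theorem product_weight_Ap_circle
    (p₀ p : ℝ) (h₀ : 1 < p₀) (h₀p : p₀ < p) (hp : p < p₀ / (p₀ - 1))
    (u ν : ℂ → ℝ)
    (hu : IsWeightOn circleMeasure u) (hν : IsWeightOn circleMeasure ν)
    (huAs : ApCircle (p / p₀) u < ⊤)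
    (huRH : RHCircle ((p₀ / (p * (p₀ - 1))) / (p₀ / (p * (p₀ - 1)) - 1)) u < ⊤)
    (hνA2 : ApCircle 2 (fun z => ν z ^ (p₀ / (p * (p₀ - 1)))) < ⊤) :
    ApCircle p (fun z => u z * ν z) < ⊤ ∧
      ApCircle p (fun z => u z * ν z) ≤
        ApCircle (p / p₀) u *
          RHCircle ((p₀ / (p * (p₀ - 1))) / (p₀ / (p * (p₀ - 1)) - 1)) u *
          (ApCircle 2 (fun z => ν z ^ (p₀ / (p * (p₀ - 1))))) ^
            (1 / (p₀ / (p * (p₀ - 1)))) := by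
  have hp1 : 1 < p := h₀.trans h₀p
  have hp₀pos : (0:ℝ) < p₀ := by linarith
  have hden : (0:ℝ) < p₀ - 1 := by linarith
  have hppos : (0:ℝ) < p := by linarith
  have hpd : p * (p₀ - 1) < p₀ := (lt_div_iff₀ hden).mp hp
  have hrden : (0:ℝ) < p * (p₀ - 1) := by positivity
  set r := p₀ / (p * (p₀ - 1)) with hr_def
  set s := p / p₀ with hs_def
  set q := r / (r - 1) with hq_def
  have hr1 : 1 < r := (one_lt_div hrden).mpr hpd
  have hs1 : 1 < s := (one_lt_div hp₀pos).mpr h₀p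
  have hrq : r.HolderConjugate q := by
    rw [hq_def]; exact Real.HolderConjugate.conjExponent hr1
  have hrpos : (0:ℝ) < r := by linarith
  set α := (p - 1) / (s - 1) with hα_def
  set β := r * (p - 1) with hβ_def
  have hs1' : (0:ℝ) < s - 1 := by linarith
  have hp1' : (0:ℝ) < p - 1 := by linarith
  have hsp : s < p := by
    rw [hs_def, div_lt_iff₀ hp₀pos]; nlinarith
  have hrval : r * (p * (p₀ - 1)) = p₀ := by
    rw [hr_def]; field_simp
  have hαβ : α.HolderConjugate β := by
    rw [Real.holderConjugate_iff]; constructor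
    · rw [hα_def, lt_div_iff₀ hs1']; linarith
    · have e0 : p ≠ 0 := ne_of_gt hppos
      have e1 : p₀ ≠ 0 := ne_of_gt hp₀pos
      have e2 : p - 1 ≠ 0 := ne_of_gt hp1'
      have e3 : p / p₀ - 1 ≠ 0 := by rw [← hs_def]; exact ne_of_gt hs1'
      have e4 : p₀ - 1 ≠ 0 := ne_of_gt hden
      rw [hα_def, hβ_def, hs_def, hr_def]
      field_simp
      ring
  have id1 : (-1 / (p - 1)) * α = -1 / (s - 1) := by
    rw [hα_def]; field_simp
  have id2 : (-1 / (p - 1)) * β = r * (-1 / ((2:ℝ) - 1)) := by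
    rw [hβ_def]; field_simp; norm_num
  have id3 : (1/α) * (p-1) = s - 1 := by
    rw [hα_def]; field_simp
  have id4 : (1/β) * (p-1) = 1/r := by
    rw [hβ_def]; field_simp
  have main : ApCircle p (fun z => u z * ν z) ≤
      ApCircle s u * RHCircle q u * (ApCircle 2 fun z => ν z ^ r) ^ (1 / r) := by
    rw [ApCircle]
    refine iSup_le fun a => iSup_le fun c => iSup_le fun hc => ?_
    set I := arcSet a c with hI_def
    by_cases hm : circleMeasure I = 0
    · have h1 : eAvg circleMeasure I (fun z => u z * ν z) = 0 := by
        unfold eAvg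
        rw [Measure.restrict_eq_zero.mpr hm, lintegral_zero_measure, ENNReal.zero_div]
      rw [h1, zero_mul]; exact zero_le
    · have hIT := circleMeasure_ne_top I
      have hA0 : eAvg circleMeasure I u ≠ 0 := eAvg_ne_zero hm hIT hu.1 hu.2
      have hAsle : eAvg circleMeasure I u *
          (eAvg circleMeasure I fun z => u z ^ (-1 / (s - 1))) ^ (s - 1) ≤ ApCircle s u := by
        rw [ApCircle]
        exact le_iSup_of_le a (le_iSup_of_le c (le_iSup_of_le hc le_rfl))
      have hRHle : (eAvg circleMeasure I fun z => u z ^ q) ^ (1 / q) / eAvg circleMeasure I u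
          ≤ RHCircle q u := by
        rw [RHCircle]
        exact le_iSup_of_le a (le_iSup_of_le c (le_iSup_of_le hc le_rfl))
      have hA2le : (eAvg circleMeasure I fun z => ν z ^ r) *
          (eAvg circleMeasure I fun z => (ν z ^ r) ^ (-1 / ((2:ℝ) - 1))) ^ ((2:ℝ) - 1)
          ≤ ApCircle 2 (fun z => ν z ^ r) := by
        rw [ApCircle]
        exact le_iSup_of_le a (le_iSup_of_le c (le_iSup_of_le hc le_rfl))
      have hAT : eAvg circleMeasure I u ≠ ⊤ := by
        intro hA
        have hX0 : (eAvg circleMeasure I fun z => u z ^ (-1 / (s - 1))) ≠ 0 :=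
          eAvg_ne_zero hm hIT (hu.1.pow_const _)
            (hu.2.mono fun z hz => Real.rpow_pos_of_pos hz _)
        have hXp : (eAvg circleMeasure I fun z => u z ^ (-1 / (s - 1))) ^ (s - 1) ≠ 0 := by
          intro h
          rcases ENNReal.rpow_eq_zero_iff.mp h with ⟨h1, _⟩ | ⟨_, h2⟩
          · exact hX0 h1
          · exact absurd h2 (not_lt.mpr hs1'.le)
        rw [hA, ENNReal.top_mul hXp] at hAsle
        exact huAs.ne (top_le_iff.mp hAsle)
      have hkey := key_arc hIT hm hu.1 hν.1 hu.2 hν.2 hrq.symm hαβ hp1 hs1 id1 id2 id3 id4 hA0 hAT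
      refine le_trans hkey ?_
      exact mul_le_mul' (mul_le_mul' hAsle hRHle)
        (ENNReal.rpow_le_rpow hA2le (le_of_lt (one_div_pos.mpr hrpos)))
  constructor
  · exact lt_of_le_of_lt main (ENNReal.mul_lt_top (ENNReal.mul_lt_top huAs huRH)
      (ENNReal.rpow_lt_top_of_nonneg (le_of_lt (one_div_pos.mpr hrpos)) hνA2.ne))
  · exact main
end
end

section
/- For 6/5 < p < 6, the weight w(x) = |x|^{(2−p)/4} on ℝ belongs to A_p(ℝ), and its characteristic satisfies [w]_{A_p(ℝ)} ≈ (1/(6−p))·(4(p−1)/(5p−6))^{p−1}, with implicit constants independent of p. -/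
noncomputable section

open MeasureTheory Set
open scoped ENNReal

/-- Average of a nonnegative quantity over a set of reals, in `ℝ≥0∞`. -/
def eAvgR (I : Set ℝ) (w : ℝ → ℝ) : ℝ≥0∞ :=
  (∫⁻ x in I, ENNReal.ofReal (w x)) / volume I

/-- The Muckenhoupt `A_p(ℝ)` characteristic: the supremum over bounded intervals of
`(⨍_I w)(⨍_I w^{-1/(p-1)})^{p-1}`. -/
def ApR (p : ℝ) (w : ℝ → ℝ) : ℝ≥0∞ :=
  ⨆ (a : ℝ) (b : ℝ) (_ : a < b),
    eAvgR (Set.Ioo a b) w * (eAvgR (Set.Ioo a b) fun x => w x ^ (-1 / (p - 1))) ^ (p - 1)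

lemma lint1 (β a b : ℝ) (hβ : -1 < β) (ha : 0 ≤ a) (hab : a < b) :
    ∫⁻ x in Ioo a b, ENNReal.ofReal (|x| ^ β)
      = ENNReal.ofReal ((b ^ (β + 1) - a ^ (β + 1)) / (β + 1)) := by
  have hcongr : ∫⁻ x in Ioo a b, ENNReal.ofReal (|x| ^ β)
      = ∫⁻ x in Ioo a b, ENNReal.ofReal (x ^ β) := by
    refine setLIntegral_congr_fun measurableSet_Ioo ?_
    intro x hx
    dsimp only
    rw [abs_of_pos (lt_of_le_of_lt ha hx.1)]
  rw [hcongr]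
  have hint : IntegrableOn (fun x : ℝ => x ^ β) (Ioo a b) := by
    exact ((intervalIntegral.intervalIntegrable_rpow' hβ (a := a) (b := b)).1).mono_set Ioo_subset_Ioc_self
  rw [← ofReal_integral_eq_lintegral_ofReal hint]
  · congr 1
    have : ∫ x in Ioo a b, x ^ β = ∫ x in a..b, x ^ β := by
      rw [intervalIntegral.integral_of_le hab.le, integral_Ioc_eq_integral_Ioo]
    rw [this, integral_rpow (Or.inl hβ)]
  · filter_upwards [ae_restrict_mem measurableSet_Ioo] with x hx
    exact Real.rpow_nonneg (le_of_lt (lt_of_le_of_lt ha hx.1)) β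

lemma lint2 (β c : ℝ) (hβ : -1 < β) (hc : 0 < c) :
    ∫⁻ x in Ioo (-c) c, ENNReal.ofReal (|x| ^ β)
      = ENNReal.ofReal (2 * (c ^ (β + 1) / (β + 1))) := by
  have hsplit : Ioo (-c) c = Ioo (-c) 0 ∪ Ico 0 c := by
    rw [Ioo_union_Ico_eq_Ioo (by linarith) hc.le]
  have hIco : ∫⁻ x in Ico (0:ℝ) c, ENNReal.ofReal (|x| ^ β)
      = ∫⁻ x in Ioo (0:ℝ) c, ENNReal.ofReal (|x| ^ β) :=
    (setLIntegral_congr Ioo_ae_eq_Ico).symm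
  have hneg : ∫⁻ x in Ioo (-c) (0:ℝ), ENNReal.ofReal (|x| ^ β)
      = ∫⁻ x in Ioo (0:ℝ) c, ENNReal.ofReal (|x| ^ β) := by
    have himg : Neg.neg '' (Ioo (0:ℝ) c) = Ioo (-c) (0:ℝ) := by
      ext x
      simp only [mem_image, mem_Ioo]
      constructor
      · rintro ⟨y, hy, rfl⟩; constructor <;> linarith [hy.1, hy.2]
      · intro h; exact ⟨-x, ⟨by linarith [h.2], by linarith [h.1]⟩, neg_neg x⟩
    have := (Measure.measurePreserving_neg (volume : Measure ℝ)).setLIntegral_comp_emb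
      measurableEmbedding_neg (fun x => ENNReal.ofReal (|x| ^ β)) (Ioo (0:ℝ) c)
    rw [himg] at this
    rw [← this]
    refine (setLIntegral_congr_fun measurableSet_Ioo ?_).symm
    intro x _
    dsimp only
    rw [abs_neg]
  have hval : ∫⁻ x in Ioo (0:ℝ) c, ENNReal.ofReal (|x| ^ β)
      = ENNReal.ofReal (c ^ (β + 1) / (β + 1)) := by
    rw [lint1 β 0 c hβ le_rfl hc, Real.zero_rpow (by linarith), sub_zero]
  rw [hsplit, lintegral_union measurableSet_Ico
    (by rw [Set.disjoint_left]; intro x hx hx'; exact absurd hx'.1 (not_le.mpr hx.2)),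
    hIco, hneg, hval, ← ENNReal.ofReal_add (div_nonneg (Real.rpow_nonneg hc.le _) (by linarith)) (div_nonneg (Real.rpow_nonneg hc.le _) (by linarith))]
  congr 1
  ring

lemma avg_le_of_forall_le {a b : ℝ} (hab : a < b) {w : ℝ → ℝ} {M : ℝ}
    (h : ∀ x ∈ Ioo a b, w x ≤ M) :
    (∫⁻ x in Ioo a b, ENNReal.ofReal (w x)) / volume (Ioo a b) ≤ ENNReal.ofReal M := by
  have hle : ∫⁻ x in Ioo a b, ENNReal.ofReal (w x)
      ≤ ENNReal.ofReal M * volume (Ioo a b) := by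
    calc ∫⁻ x in Ioo a b, ENNReal.ofReal (w x)
        ≤ ∫⁻ _ in Ioo a b, ENNReal.ofReal M :=
          setLIntegral_mono measurable_const (fun x hx => ENNReal.ofReal_le_ofReal (h x hx))
      _ = ENNReal.ofReal M * volume (Ioo a b) := setLIntegral_const _ _
  rw [ENNReal.div_le_iff_le_mul]
  · exact hle
  · left
    rw [Real.volume_Ioo]
    exact ne_of_gt (ENNReal.ofReal_pos.mpr (by linarith))
  · left
    rw [Real.volume_Ioo]; exact ENNReal.ofReal_ne_top

lemma eAvgR_le_of_forall_le {a b : ℝ} (hab : a < b) {w : ℝ → ℝ} {M : ℝ}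
    (h : ∀ x ∈ Ioo a b, w x ≤ M) : eAvgR (Ioo a b) w ≤ ENNReal.ofReal M :=
  avg_le_of_forall_le hab h

lemma avg01 (β : ℝ) (hβ : -1 < β) :
    eAvgR (Ioo 0 1) (fun x => |x| ^ β) = ENNReal.ofReal (1 / (β + 1)) := by
  rw [eAvgR, lint1 β 0 1 hβ le_rfl one_pos, Real.volume_Ioo]
  norm_num [Real.one_rpow, Real.zero_rpow (show β + 1 ≠ 0 by linarith)]

lemma avg_near {β a b : ℝ} (hβ : -1 < β) (hβ1 : β ≤ 1) (hab : a < b)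
    (ha : -(2 * (b - a)) < a) (hb : b < 2 * (b - a)) :
    eAvgR (Ioo a b) (fun x => |x| ^ β) ≤ ENNReal.ofReal (8 * (b - a) ^ β / (β + 1)) := by
  set L := b - a with hLdef
  have hL : 0 < L := by simp [hLdef]; linarith
  have hsub : Ioo a b ⊆ Ioo (-(2 * L)) (2 * L) := by
    intro x hx
    exact ⟨by linarith [hx.1], by linarith [hx.2]⟩
  have h1 : eAvgR (Ioo a b) (fun x => |x| ^ β)
      ≤ ENNReal.ofReal (2 * ((2 * L) ^ (β + 1) / (β + 1))) / ENNReal.ofReal L := by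
    rw [eAvgR, Real.volume_Ioo, ← hLdef]
    refine ENNReal.div_le_div_right ?_ _
    calc ∫⁻ x in Ioo a b, ENNReal.ofReal (|x| ^ β)
        ≤ ∫⁻ x in Ioo (-(2 * L)) (2 * L), ENNReal.ofReal (|x| ^ β) :=
          lintegral_mono_set hsub
      _ = ENNReal.ofReal (2 * ((2 * L) ^ (β + 1) / (β + 1))) := lint2 β (2 * L) hβ (by linarith)
  refine h1.trans ?_
  rw [← ENNReal.ofReal_div_of_pos hL]
  apply ENNReal.ofReal_le_ofReal
  have h2 : (2 * L) ^ (β + 1) = 2 ^ (β + 1) * L ^ (β + 1) :=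
    Real.mul_rpow (by norm_num) hL.le
  have h3 : L ^ (β + 1) = L ^ β * L := by
    rw [Real.rpow_add hL, Real.rpow_one]
  have h4 : (2:ℝ) ^ (β + 1) ≤ 4 := by
    calc (2:ℝ) ^ (β + 1) ≤ 2 ^ (2:ℝ) :=
        Real.rpow_le_rpow_of_exponent_le (by norm_num) (by linarith)
      _ = 4 := by
        rw [show (2:ℝ) = ((2:ℕ):ℝ) by norm_num, Real.rpow_natCast]; norm_num
  have h5 : 2 * ((2 * L) ^ (β + 1) / (β + 1)) / L = 2 * 2 ^ (β + 1) * L ^ β / (β + 1) := by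
    rw [h2, h3]; field_simp [hL.ne', show β + 1 ≠ 0 by linarith]
  rw [h5]
  have hLβ : 0 ≤ L ^ β := Real.rpow_nonneg hL.le β
  have h6 : 2 * 2 ^ (β + 1) * L ^ β ≤ 8 * L ^ β := by nlinarith
  gcongr
  linarith

lemma pt_far {β m t : ℝ} (hm : 0 < m) (h1 : m ≤ t) (h2 : t ≤ 2 * m)
    (hβu : β ≤ 1) : t ^ β ≤ 2 * m ^ β := by
  rcases le_or_gt 0 β with hβ0 | hβ0
  · calc t ^ β ≤ (2 * m) ^ β := Real.rpow_le_rpow (by linarith) h2 hβ0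
      _ = 2 ^ β * m ^ β := Real.mul_rpow (by norm_num) hm.le
      _ ≤ 2 * m ^ β := by
        have : (2:ℝ) ^ β ≤ 2 ^ (1:ℝ) :=
          Real.rpow_le_rpow_of_exponent_le (by norm_num) hβu
        rw [Real.rpow_one] at this
        exact mul_le_mul_of_nonneg_right this (Real.rpow_nonneg hm.le β)
  · calc t ^ β ≤ m ^ β := Real.rpow_le_rpow_of_nonpos hm h1 hβ0.le
      _ ≤ 2 * m ^ β := by nlinarith [Real.rpow_nonneg hm.le β]

lemma avg_far {β a b m : ℝ} (hab : a < b) (hm : 0 < m) (hβu : β ≤ 1)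
    (h : ∀ x ∈ Ioo a b, m ≤ |x| ∧ |x| ≤ 2 * m) :
    eAvgR (Ioo a b) (fun x => |x| ^ β) ≤ ENNReal.ofReal (2 * m ^ β) :=
  eAvgR_le_of_forall_le hab fun x hx => pt_far hm (h x hx).1 (h x hx).2 hβu

-- basic facts about the exponents
lemma fact_b2 {p : ℝ} (hp1 : 6 / 5 < p) :
    (2 - p) / 4 * (-1 / (p - 1)) = (p - 2) / (4 * (p - 1)) := by
  have h : p - 1 ≠ 0 := by intro h; nlinarith
  field_simp
  ring

lemma fact_sum {p : ℝ} (hp1 : 6 / 5 < p) :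
    (2 - p) / 4 + (2 - p) / 4 * (-1 / (p - 1)) * (p - 1) = 0 := by
  have h : p - 1 ≠ 0 := by intro h; nlinarith
  field_simp
  ring

lemma fact_b2_mem {p : ℝ} (hp1 : 6 / 5 < p) (hp2 : p < 6) :
    -1 < (2 - p) / 4 * (-1 / (p - 1)) ∧ (2 - p) / 4 * (-1 / (p - 1)) ≤ 1 := by
  rw [fact_b2 hp1]
  have hq : 0 < p - 1 := by linarith
  constructor
  · rw [neg_lt, ← neg_div, div_lt_iff₀ (by linarith : (0:ℝ) < 4 * (p - 1))]
    linarith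
  · rw [div_le_one (by linarith : (0:ℝ) < 4 * (p - 1))]
    linarith

lemma fact_b2_add {p : ℝ} (hp1 : 6 / 5 < p) :
    (2 - p) / 4 * (-1 / (p - 1)) + 1 = (5 * p - 6) / (4 * (p - 1)) := by
  rw [fact_b2 hp1]
  have hq : 0 < p - 1 := by linarith
  field_simp
  ring

lemma calc_near {p L : ℝ} (hp1 : 6 / 5 < p) (hp2 : p < 6) (hL : 0 < L) :
    8 * L ^ ((2 - p) / 4) / ((2 - p) / 4 + 1) *
        (8 * L ^ ((2 - p) / 4 * (-1 / (p - 1))) / ((2 - p) / 4 * (-1 / (p - 1)) + 1)) ^ (p - 1)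
      ≤ 1048576 * (1 / (6 - p) * (4 * (p - 1) / (5 * p - 6)) ^ (p - 1)) := by
  have hq : (0:ℝ) < p - 1 := by linarith
  have h56 : (0:ℝ) < 5 * p - 6 := by linarith
  have h6p : (0:ℝ) < 6 - p := by linarith
  have hG : (0:ℝ) ≤ 4 * (p - 1) / (5 * p - 6) := by positivity
  have hLb2 : 0 ≤ L ^ ((2 - p) / 4 * (-1 / (p - 1))) := Real.rpow_nonneg hL.le _
  have e1 : 8 * L ^ ((2 - p) / 4 * (-1 / (p - 1))) / ((2 - p) / 4 * (-1 / (p - 1)) + 1)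
      = 8 * (L ^ ((2 - p) / 4 * (-1 / (p - 1))) * (4 * (p - 1) / (5 * p - 6))) := by
    rw [fact_b2_add hp1]
    field_simp
  have e2 : (8 * (L ^ ((2 - p) / 4 * (-1 / (p - 1))) * (4 * (p - 1) / (5 * p - 6)))) ^ (p - 1)
      = 8 ^ (p - 1) * ((L ^ ((2 - p) / 4 * (-1 / (p - 1)))) ^ (p - 1)
          * (4 * (p - 1) / (5 * p - 6)) ^ (p - 1)) := by
    rw [Real.mul_rpow (by norm_num) (mul_nonneg hLb2 hG), Real.mul_rpow hLb2 hG]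
  have e3 : (L ^ ((2 - p) / 4 * (-1 / (p - 1)))) ^ (p - 1)
      = L ^ ((2 - p) / 4 * (-1 / (p - 1)) * (p - 1)) := (Real.rpow_mul hL.le _ _).symm
  have e4 : (8:ℝ) ^ p = 8 * 8 ^ (p - 1) := by
    have h := Real.rpow_add (show (0:ℝ) < 8 by norm_num) 1 (p - 1)
    rw [show (1:ℝ) + (p - 1) = p by ring, Real.rpow_one] at h
    exact h
  have e5 : L ^ ((2 - p) / 4) * L ^ ((2 - p) / 4 * (-1 / (p - 1)) * (p - 1)) = 1 := by
    rw [← Real.rpow_add hL, fact_sum hp1, Real.rpow_zero]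
  have hb1a : (2 - p) / 4 + 1 = (6 - p) / 4 := by ring
  rw [e1, e2, e3, hb1a]
  have e6 : 8 * L ^ ((2 - p) / 4) / ((6 - p) / 4) * (8 ^ (p - 1)
        * (L ^ ((2 - p) / 4 * (-1 / (p - 1)) * (p - 1)) * (4 * (p - 1) / (5 * p - 6)) ^ (p - 1)))
      = (8 * 8 ^ (p - 1)) * ((L ^ ((2 - p) / 4) * L ^ ((2 - p) / 4 * (-1 / (p - 1)) * (p - 1)))
          * (4 * (1 / (6 - p)) * (4 * (p - 1) / (5 * p - 6)) ^ (p - 1))) := by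
    field_simp
  rw [e6, e5, ← e4]
  have h8 : (8:ℝ) ^ p ≤ 262144 := by
    calc (8:ℝ) ^ p ≤ 8 ^ (6:ℝ) := Real.rpow_le_rpow_of_exponent_le (by norm_num) hp2.le
      _ = 262144 := by
        rw [show (6:ℝ) = ((6:ℕ):ℝ) by norm_num, Real.rpow_natCast]; norm_num
  have hX : 0 ≤ 1 / (6 - p) * (4 * (p - 1) / (5 * p - 6)) ^ (p - 1) :=
    mul_nonneg (by positivity) (Real.rpow_nonneg hG _)
  nlinarith [mul_le_mul_of_nonneg_right h8 hX]

lemma calc_far {p m : ℝ} (hp1 : 6 / 5 < p) (hp2 : p < 6) (hm : 0 < m) :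
    2 * m ^ ((2 - p) / 4) * (2 * m ^ ((2 - p) / 4 * (-1 / (p - 1)))) ^ (p - 1)
      ≤ 1048576 * (1 / (6 - p) * (4 * (p - 1) / (5 * p - 6)) ^ (p - 1)) := by
  have hq : (0:ℝ) < p - 1 := by linarith
  have h56 : (0:ℝ) < 5 * p - 6 := by linarith
  have h6p : (0:ℝ) < 6 - p := by linarith
  have hG : (0:ℝ) ≤ 4 * (p - 1) / (5 * p - 6) := by positivity
  have hmb2 : 0 ≤ m ^ ((2 - p) / 4 * (-1 / (p - 1))) := Real.rpow_nonneg hm.le _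
  have e2 : (2 * m ^ ((2 - p) / 4 * (-1 / (p - 1)))) ^ (p - 1)
      = 2 ^ (p - 1) * m ^ ((2 - p) / 4 * (-1 / (p - 1)) * (p - 1)) := by
    rw [Real.mul_rpow (by norm_num) hmb2, ← Real.rpow_mul hm.le]
  have e4 : (2:ℝ) ^ p = 2 * 2 ^ (p - 1) := by
    have h := Real.rpow_add (show (0:ℝ) < 2 by norm_num) 1 (p - 1)
    rw [show (1:ℝ) + (p - 1) = p by ring, Real.rpow_one] at h
    exact h
  have e5 : m ^ ((2 - p) / 4) * m ^ ((2 - p) / 4 * (-1 / (p - 1)) * (p - 1)) = 1 := by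
    rw [← Real.rpow_add hm, fact_sum hp1, Real.rpow_zero]
  have elhs : 2 * m ^ ((2 - p) / 4) * (2 * m ^ ((2 - p) / 4 * (-1 / (p - 1)))) ^ (p - 1)
      = 2 ^ p := by
    rw [e2, e4]
    calc 2 * m ^ ((2 - p) / 4) * (2 ^ (p - 1) * m ^ ((2 - p) / 4 * (-1 / (p - 1)) * (p - 1)))
        = 2 * 2 ^ (p - 1) * (m ^ ((2 - p) / 4) * m ^ ((2 - p) / 4 * (-1 / (p - 1)) * (p - 1))) := by
          ring
      _ = 2 * 2 ^ (p - 1) := by rw [e5, mul_one]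
  rw [elhs]
  have h2p : (2:ℝ) ^ p ≤ 64 := by
    calc (2:ℝ) ^ p ≤ 2 ^ (6:ℝ) := Real.rpow_le_rpow_of_exponent_le (by norm_num) hp2.le
      _ = 64 := by rw [show (6:ℝ) = ((6:ℕ):ℝ) by norm_num, Real.rpow_natCast]; norm_num
  have hG45 : (4 / 5 : ℝ) ≤ 4 * (p - 1) / (5 * p - 6) := by
    rw [div_le_div_iff₀ (by norm_num) h56]
    linarith
  have hGq : (1024 / 3125 : ℝ) ≤ (4 * (p - 1) / (5 * p - 6)) ^ (p - 1) := by
    rcases le_or_gt 1 (4 * (p - 1) / (5 * p - 6)) with h | h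
    · have h1 : (1:ℝ) ^ (p - 1) ≤ (4 * (p - 1) / (5 * p - 6)) ^ (p - 1) :=
        Real.rpow_le_rpow (by norm_num) h hq.le
      rw [Real.one_rpow] at h1
      linarith
    · have h5q : (4 * (p - 1) / (5 * p - 6)) ^ (5:ℝ) ≤ (4 * (p - 1) / (5 * p - 6)) ^ (p - 1) :=
        Real.rpow_le_rpow_of_exponent_ge (by linarith) h.le (by linarith)
      have h45 : (4 / 5 : ℝ) ^ (5:ℝ) ≤ (4 * (p - 1) / (5 * p - 6)) ^ (5:ℝ) :=
        Real.rpow_le_rpow (by norm_num) hG45 (by norm_num)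
      have hnum : (4 / 5 : ℝ) ^ (5:ℝ) = 1024 / 3125 := by
        rw [show (5:ℝ) = ((5:ℕ):ℝ) by norm_num, Real.rpow_natCast]; norm_num
      linarith
  have h16 : (1 / 6 : ℝ) ≤ 1 / (6 - p) := by
    apply one_div_le_one_div_of_le h6p
    linarith
  have hfinal : (1 / 6 : ℝ) * (1024 / 3125) ≤ 1 / (6 - p) * (4 * (p - 1) / (5 * p - 6)) ^ (p - 1) :=
    mul_le_mul h16 hGq (by norm_num) (by positivity)
  linarith

lemma fact_b1_mem {p : ℝ} (hp1 : 6 / 5 < p) (hp2 : p < 6) :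
    -1 < (2 - p) / 4 ∧ (2 - p) / 4 ≤ 1 := by
  constructor <;> [linarith; linarith]

lemma glue {A B : ℝ≥0∞} {u v q W : ℝ} (hA : A ≤ ENNReal.ofReal u) (hB : B ≤ ENNReal.ofReal v)
    (hv : 0 ≤ v) (hq : 0 ≤ q) (h : u * v ^ q ≤ W) : A * B ^ q ≤ ENNReal.ofReal W := by
  rcases le_or_gt u 0 with hu | hu
  · have hA0 : A = 0 := le_antisymm (hA.trans (by simp [ENNReal.ofReal_eq_zero.mpr hu])) (zero_le (a := A))
    simp [hA0]
  calc A * B ^ q ≤ ENNReal.ofReal u * (ENNReal.ofReal v) ^ q :=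
        mul_le_mul' hA (ENNReal.rpow_le_rpow hB hq)
    _ = ENNReal.ofReal u * ENNReal.ofReal (v ^ q) := by
        rw [ENNReal.ofReal_rpow_of_nonneg hv hq]
    _ = ENNReal.ofReal (u * v ^ q) := (ENNReal.ofReal_mul hu.le).symm
    _ ≤ ENNReal.ofReal W := ENNReal.ofReal_le_ofReal h

lemma interval_bd {p a b : ℝ} (hp1 : 6 / 5 < p) (hp2 : p < 6) (hab : a < b) :
    eAvgR (Ioo a b) (fun x => |x| ^ ((2 - p) / 4)) *
      (eAvgR (Ioo a b) (fun x => |x| ^ ((2 - p) / 4 * (-1 / (p - 1))))) ^ (p - 1)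
    ≤ ENNReal.ofReal (1048576 * (1 / (6 - p) * (4 * (p - 1) / (5 * p - 6)) ^ (p - 1))) := by
  have hq : (0:ℝ) ≤ p - 1 := by linarith
  have hb1 := fact_b1_mem hp1 hp2
  have hb2 := fact_b2_mem hp1 hp2
  have hL : 0 < b - a := by linarith
  rcases le_or_gt (b - a) a with hfar | hnear
  · -- far right : a ≥ L > 0
    have ha : 0 < a := lt_of_lt_of_le hL hfar
    have hmem : ∀ x ∈ Ioo a b, a ≤ |x| ∧ |x| ≤ 2 * a := by
      intro x hx
      have hx1 := hx.1; have hx2 := hx.2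
      rw [abs_of_pos (by linarith)]
      constructor <;> linarith
    exact glue (avg_far hab ha hb1.2 hmem) (avg_far hab ha hb2.2 hmem)
      (by positivity) hq (calc_far hp1 hp2 ha)
  rcases le_or_gt b (-(b - a)) with hfar' | hnear'
  · -- far left : b ≤ -L
    have hb : 0 < -b := by linarith
    have hmem : ∀ x ∈ Ioo a b, -b ≤ |x| ∧ |x| ≤ 2 * -b := by
      intro x hx
      have hx1 := hx.1; have hx2 := hx.2
      rw [abs_of_neg (by linarith)]
      constructor <;> linarith
    exact glue (avg_far hab hb hb1.2 hmem) (avg_far hab hb hb2.2 hmem)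
      (by positivity) hq (calc_far hp1 hp2 hb)
  · -- near the origin
    have h1 : -(2 * (b - a)) < a := by linarith
    have h2 : b < 2 * (b - a) := by linarith
    refine glue (avg_near hb1.1 hb1.2 hab h1 h2) (avg_near hb2.1 hb2.2 hab h1 h2)
      ?_ hq (calc_near hp1 hp2 hL)
    have h1' := Real.rpow_nonneg hL.le ((2 - p) / 4 * (-1 / (p - 1)))
    exact div_nonneg (by positivity) (by linarith [hb2.1])

/-- For `6/5 < p < 6`, the weight `w(x) = |x|^{(2-p)/4}` on `ℝ` belongs
to `A_p(ℝ)`, with `[w]_{A_p(ℝ)} ≈ (1/(6-p))·(4(p-1)/(5p-6))^{p-1}`, the implicit constants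
being independent of `p`. -/
theorem power_weight_Ap_characteristic :
    ∃ c C : ℝ, 0 < c ∧ 0 < C ∧
      ∀ p : ℝ, 6 / 5 < p → p < 6 →
        ApR p (fun x => |x| ^ ((2 - p) / 4)) < ⊤ ∧
        ENNReal.ofReal (c * (1 / (6 - p) * (4 * (p - 1) / (5 * p - 6)) ^ (p - 1))) ≤
          ApR p (fun x => |x| ^ ((2 - p) / 4)) ∧
        ApR p (fun x => |x| ^ ((2 - p) / 4)) ≤
          ENNReal.ofReal (C * (1 / (6 - p) * (4 * (p - 1) / (5 * p - 6)) ^ (p - 1))) := by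
  refine ⟨1, 1048576, one_pos, by norm_num, fun p hp1 hp2 => ?_⟩
  have hq : (0:ℝ) < p - 1 := by linarith
  have h56 : (0:ℝ) < 5 * p - 6 := by linarith
  have h6p : (0:ℝ) < 6 - p := by linarith
  have hb1 := fact_b1_mem hp1 hp2
  have hb2 := fact_b2_mem hp1 hp2
  have hwe : ∀ s : Set ℝ,
      (eAvgR s fun x => (fun x : ℝ => |x| ^ ((2 - p) / 4)) x ^ (-1 / (p - 1)))
        = eAvgR s fun x => |x| ^ ((2 - p) / 4 * (-1 / (p - 1))) := by
    intro s
    congr 1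
    funext x
    simp only
    rw [← Real.rpow_mul (abs_nonneg x)]
  have hupper : ApR p (fun x => |x| ^ ((2 - p) / 4)) ≤
      ENNReal.ofReal (1048576 * (1 / (6 - p) * (4 * (p - 1) / (5 * p - 6)) ^ (p - 1))) := by
    rw [ApR]
    refine iSup_le fun a => iSup_le fun b => iSup_le fun hab => ?_
    rw [hwe]
    exact interval_bd hp1 hp2 hab
  have hlower : ENNReal.ofReal (1 * (1 / (6 - p) * (4 * (p - 1) / (5 * p - 6)) ^ (p - 1))) ≤
      ApR p (fun x => |x| ^ ((2 - p) / 4)) := by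
    have hA : (eAvgR (Ioo (0:ℝ) 1) fun x => |x| ^ ((2 - p) / 4))
        = ENNReal.ofReal (1 / ((2 - p) / 4 + 1)) := avg01 _ hb1.1
    have hB : (eAvgR (Ioo (0:ℝ) 1) fun x => |x| ^ ((2 - p) / 4 * (-1 / (p - 1))))
        = ENNReal.ofReal (1 / ((2 - p) / 4 * (-1 / (p - 1)) + 1)) := avg01 _ hb2.1
    have hBval : 1 / ((2 - p) / 4 * (-1 / (p - 1)) + 1) = 4 * (p - 1) / (5 * p - 6) := by
      rw [fact_b2_add hp1]
      rw [one_div_div]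
    have hAval : 1 / ((2 - p) / 4 + 1) = 4 / (6 - p) := by
      rw [show (2 - p) / 4 + 1 = (6 - p) / 4 by ring, one_div_div]
    have step : ENNReal.ofReal (1 * (1 / (6 - p) * (4 * (p - 1) / (5 * p - 6)) ^ (p - 1))) ≤
        (eAvgR (Ioo (0:ℝ) 1) fun x => |x| ^ ((2 - p) / 4)) *
          (eAvgR (Ioo (0:ℝ) 1) fun x => |x| ^ ((2 - p) / 4 * (-1 / (p - 1)))) ^ (p - 1) := by
      rw [hA, hB, hBval, hAval, ENNReal.ofReal_rpow_of_nonneg (by positivity) hq.le,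
        ← ENNReal.ofReal_mul (by positivity)]
      apply ENNReal.ofReal_le_ofReal
      have hGq : 0 ≤ (4 * (p - 1) / (5 * p - 6)) ^ (p - 1) :=
        Real.rpow_nonneg (by positivity) _
      rw [one_mul]
      have : 1 / (6 - p) ≤ 4 / (6 - p) := by
        gcongr
        norm_num
      nlinarith
    refine step.trans ?_
    rw [ApR]
    refine le_iSup_of_le (0:ℝ) (le_iSup_of_le (1:ℝ) (le_iSup_of_le (by norm_num : (0:ℝ) < 1) ?_))
    rw [hwe]
  exact ⟨hupper.trans_lt ENNReal.ofReal_lt_top, hlower, hupper⟩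
end
end

section
/- Suppose 0 < r < 2/5. If I₁ = I₁(p₁, r) is an arc of radius r centered at a point p₁ ∈ ∂𝔻, then there exists a point p₂ ∈ ∂𝔻 and an arc I₂ = I₂(p₂, r) of radius r centered at p₂, disjoint from I₁, such that for j ∈ {1,2}, any function f > 0 supported in I_j, and any z ∈ I_k with k ≠ j, one has |S₀f(z)| ≥ (1/(28π)) ⨍_{I_j} f d θ̃. -/
noncomputable section

open MeasureTheory Filter Set
open scoped ENNReal ComplexConjugate

/-- The argument of `z` normalized to lie in `[0, 2π)`. -/
def circArg (z : ℂ) : ℝ :=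
  if 0 ≤ Complex.arg z then Complex.arg z else Complex.arg z + 2 * Real.pi

/-- The arc length "metric" `d(e^{iθ}, e^{iφ}) = |θ - φ|`, `θ, φ ∈ [0, 2π)`. -/
def arcDist (z w : ℂ) : ℝ := |circArg z - circArg w|

/-- The arc `I(ζ, r) = {ξ ∈ ∂𝔻 : d(ξ, ζ) < r}` centered at `ζ ∈ ∂𝔻` of radius `r`. -/
def arcBall (ζ : ℂ) (r : ℝ) : Set ℂ :=
  {ξ ∈ Metric.sphere (0 : ℂ) 1 | arcDist ξ ζ < r}

/-- The Szegő projection evaluated by its kernel: for `f` supported away from `z`,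
`S₀ f (z) = ∫ f(w)/(1 - w̄ z) d θ̃(w)`. -/
def szegoKernelInt (f : ℂ → ℝ) (z : ℂ) : ℂ :=
  ∫ w, (f w : ℂ) / (1 - conj w * z) ∂circleMeasure

lemma circArg_mem (z : ℂ) : circArg z ∈ Set.Ico 0 (2 * Real.pi) := by
  have h1 := Complex.arg_le_pi z
  have h2 := Complex.neg_pi_lt_arg z
  have hpi := Real.pi_pos
  unfold circArg
  split <;> constructor <;> linarith

lemma exp_circArg {z : ℂ} (hz : z ∈ Metric.sphere (0 : ℂ) 1) :
    Complex.exp (circArg z * Complex.I) = z := by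
  have habs : ‖z‖ = 1 := by simpa using hz
  have h := Complex.norm_mul_exp_arg_mul_I z
  rw [habs, Complex.ofReal_one, one_mul] at h
  unfold circArg
  split
  · exact h
  · push_cast
    rw [add_mul, Complex.exp_add]
    rw [show ((2:ℂ) * Real.pi * Complex.I) = 2 * ↑Real.pi * Complex.I by push_cast; ring,
      Complex.exp_two_pi_mul_I, mul_one]
    exact h

lemma exp_mem_sphere (θ : ℝ) : Complex.exp (θ * Complex.I) ∈ Metric.sphere (0 : ℂ) 1 := by
  simp [Complex.norm_exp_ofReal_mul_I]

lemma circArg_exp {θ : ℝ} (h : θ ∈ Set.Ico 0 (2 * Real.pi)) :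
    circArg (Complex.exp (θ * Complex.I)) = θ := by
  have hpi := Real.pi_pos
  rcases le_or_gt θ Real.pi with hle | hgt
  · have harg : Complex.arg (Complex.exp (θ * Complex.I)) = θ := by
      rw [Complex.exp_mul_I, ← Complex.ofReal_cos, ← Complex.ofReal_sin]
      exact_mod_cast Complex.arg_cos_add_sin_mul_I ⟨by linarith [h.1], hle⟩
    unfold circArg
    rw [harg, if_pos h.1]
  · have hper : Complex.exp (θ * Complex.I) = Complex.exp ((θ - 2 * Real.pi) * Complex.I) := by
      rw [show ((θ : ℂ) * Complex.I) = (↑(θ - 2*Real.pi) * Complex.I) + 2 * ↑Real.pi * Complex.I by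
        push_cast; ring, Complex.exp_add, Complex.exp_two_pi_mul_I, mul_one]
      push_cast; ring_nf
    have harg : Complex.arg (Complex.exp (θ * Complex.I)) = θ - 2 * Real.pi := by
      rw [hper, show ((θ:ℂ) - 2*↑Real.pi) * Complex.I = (↑(θ - 2*Real.pi) : ℂ) * Complex.I by
        push_cast; ring, Complex.exp_mul_I, ← Complex.ofReal_cos, ← Complex.ofReal_sin]
      exact_mod_cast Complex.arg_cos_add_sin_mul_I ⟨by linarith, by linarith [h.2]⟩
    unfold circArg
    rw [harg, if_neg (by linarith [h.2])]
    ring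

lemma measurable_circArg : Measurable circArg := by
  unfold circArg
  exact Measurable.ite (measurableSet_le measurable_const Complex.measurable_arg)
    Complex.measurable_arg (Complex.measurable_arg.add_const _)

lemma measurableSet_arcBall (ζ : ℂ) (r : ℝ) : MeasurableSet (arcBall ζ r) := by
  have h1 : MeasurableSet (Metric.sphere (0 : ℂ) 1) := Metric.isClosed_sphere.measurableSet
  have h2 : MeasurableSet {ξ : ℂ | arcDist ξ ζ < r} := by
    unfold arcDist
    exact measurableSet_lt ((measurable_circArg.sub measurable_const).abs) measurable_const
  exact h1.inter h2

lemma circleMeasure_apply {S : Set ℂ} (hS : MeasurableSet S) :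
    circleMeasure S =
      ENNReal.ofReal (2 * Real.pi)⁻¹ *
        volume ((circleMap 0 1 ⁻¹' S) ∩ Set.Ioc (0 : ℝ) (2 * Real.pi)) := by
  unfold circleMeasure
  rw [Measure.smul_apply,
    Measure.map_apply (continuous_circleMap 0 1).measurable hS,
    Measure.restrict_apply ((continuous_circleMap 0 1).measurable hS)]
  rfl

lemma circleMeasure_univ : circleMeasure Set.univ = 1 := by
  have hpi := Real.pi_pos
  rw [circleMeasure_apply MeasurableSet.univ]
  rw [Set.preimage_univ, Set.univ_inter, Real.volume_Ioc]
  rw [← ENNReal.ofReal_mul (by positivity)]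
  rw [show (2 * Real.pi)⁻¹ * (2 * Real.pi - 0) = 1 by field_simp; ring]
  exact ENNReal.ofReal_one

lemma circleMeasure_le_one (S : Set ℂ) : circleMeasure S ≤ 1 :=
  circleMeasure_univ ▸ measure_mono (Set.subset_univ S)

lemma circleMeasure_arcBall_ge {θ₀ r : ℝ} (hθ : θ₀ ∈ Set.Ico 0 (2 * Real.pi))
    (hr0 : 0 < r) (hr : r < 2) :
    ENNReal.ofReal ((2 * Real.pi)⁻¹ * r) ≤
      circleMeasure (arcBall (Complex.exp (θ₀ * Complex.I)) r) := by
  have hpi : (3:ℝ) < Real.pi := Real.pi_gt_three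
  set J : Set ℝ := if θ₀ + r ≤ 2 * Real.pi then Set.Ioo θ₀ (θ₀ + r)
    else Set.Ioo (θ₀ - r) θ₀ with hJ
  have hsub : J ⊆ (circleMap 0 1 ⁻¹' arcBall (Complex.exp (θ₀ * Complex.I)) r) ∩
      Set.Ioc (0 : ℝ) (2 * Real.pi) := by
    intro θ hθJ
    have hθmem : θ ∈ Set.Ioc (0:ℝ) (2 * Real.pi) ∧ θ < 2 * Real.pi ∧ |θ - θ₀| < r := by
      rw [hJ] at hθJ
      split_ifs at hθJ with hcase
      · obtain ⟨h1, h2⟩ := hθJ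
        refine ⟨⟨by linarith [hθ.1], by linarith⟩, by linarith, ?_⟩
        rw [abs_lt]; constructor <;> linarith
      · push_neg at hcase
        obtain ⟨h1, h2⟩ := hθJ
        refine ⟨⟨by linarith [hθ.2], by linarith [hθ.2]⟩, by linarith [hθ.2], ?_⟩
        rw [abs_lt]; constructor <;> linarith
    obtain ⟨hIoc, hlt, habs⟩ := hθmem
    refine ⟨?_, hIoc⟩
    have hmap : circleMap 0 1 θ = Complex.exp (θ * Complex.I) := by
      simp [circleMap]
    rw [Set.mem_preimage, hmap]
    refine ⟨exp_mem_sphere θ, ?_⟩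
    unfold arcDist
    rw [circArg_exp ⟨le_of_lt hIoc.1, hlt⟩, circArg_exp hθ]
    exact habs
  have hvol : ENNReal.ofReal r ≤
      volume ((circleMap 0 1 ⁻¹' arcBall (Complex.exp (θ₀ * Complex.I)) r) ∩
        Set.Ioc (0 : ℝ) (2 * Real.pi)) := by
    refine le_trans ?_ (measure_mono hsub)
    rw [hJ]
    split_ifs <;> rw [Real.volume_Ioo] <;>
      exact ENNReal.ofReal_le_ofReal (by linarith)
  rw [circleMeasure_apply (measurableSet_arcBall _ _),
    ENNReal.ofReal_mul (by positivity)]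
  exact mul_le_mul_right hvol _

lemma normSq_one_sub_exp (ψ : ℝ) :
    Complex.normSq (1 - Complex.exp (ψ * Complex.I)) = 2 - 2 * Real.cos ψ := by
  have hre : (1 - Complex.exp (ψ * Complex.I)).re = 1 - Real.cos ψ := by
    simp [Complex.sub_re, Complex.exp_ofReal_mul_I_re]
  have him : (1 - Complex.exp (ψ * Complex.I)).im = -Real.sin ψ := by
    simp [Complex.sub_im, Complex.exp_ofReal_mul_I_im]
  rw [Complex.normSq_apply, hre, him]
  nlinarith [Real.sin_sq_add_cos_sq ψ]

lemma inv_one_sub_exp_im (ψ : ℝ) :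
    ((1 - Complex.exp (ψ * Complex.I))⁻¹).im = Real.sin ψ / (2 - 2 * Real.cos ψ) := by
  have him : (1 - Complex.exp (ψ * Complex.I)).im = -Real.sin ψ := by
    simp [Complex.sub_im, Complex.exp_ofReal_mul_I_im]
  rw [Complex.inv_im, normSq_one_sub_exp, him]
  ring

lemma kernel_bounds {r ψ : ℝ} (hr0 : 0 < r) (hr : r < 2/5) (h1 : r < ψ) (h2 : ψ < 5*r) :
    1/(10*r) ≤ ((1 - Complex.exp (ψ * Complex.I))⁻¹).im ∧
    ‖(1 - Complex.exp (ψ * Complex.I))⁻¹‖ ≤ (2 * Real.sin (r/2))⁻¹ := by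
  have hpi : (3:ℝ) < Real.pi := Real.pi_gt_three
  have hx0 : 0 < ψ/2 := by linarith
  have hx1 : ψ/2 < 1 := by linarith
  have hs0 : 0 < Real.sin (ψ/2) := Real.sin_pos_of_pos_of_lt_pi hx0 (by linarith)
  have hsr : 0 < Real.sin (r/2) := Real.sin_pos_of_pos_of_lt_pi (by linarith) (by linarith)
  have hsle : Real.sin (ψ/2) ≤ ψ/2 := (Real.sin_lt hx0).le
  have hc : 1/2 ≤ Real.cos (ψ/2) := by
    have := Real.one_sub_sq_div_two_le_cos (x := ψ/2)
    nlinarith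
  have hsinψ : Real.sin ψ = 2 * Real.sin (ψ/2) * Real.cos (ψ/2) := by
    rw [show ψ = 2 * (ψ/2) by ring, Real.sin_two_mul]
    ring_nf
  have hcos2 := Real.cos_two_mul (ψ/2)
  rw [show 2 * (ψ/2) = ψ by ring] at hcos2
  have hcosψ : 2 - 2 * Real.cos ψ = 4 * Real.sin (ψ/2)^2 := by
    nlinarith [Real.sin_sq_add_cos_sq (ψ/2)]
  constructor
  · rw [inv_one_sub_exp_im, hsinψ, hcosψ]
    rw [div_le_div_iff₀ (by positivity) (by positivity)]
    nlinarith [mul_pos hr0 hs0]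
  · rw [norm_inv]
    have habs : ‖1 - Complex.exp (ψ*Complex.I)‖ = 2 * Real.sin (ψ/2) := by
      rw [Complex.norm_def, normSq_one_sub_exp, hcosψ,
        show 4 * Real.sin (ψ/2)^2 = (2*Real.sin (ψ/2))^2 by ring]
      exact Real.sqrt_sq (by positivity)
    rw [habs]
    have hmono : Real.sin (r/2) ≤ Real.sin (ψ/2) :=
      Real.sin_le_sin_of_le_of_le_pi_div_two (by linarith) (by linarith) (by linarith)
    gcongr

lemma kernel_bounds_neg {r ψ : ℝ} (hr0 : 0 < r) (hr : r < 2/5) (h1 : -(5*r) < ψ) (h2 : ψ < -r) :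
    ((1 - Complex.exp (ψ * Complex.I))⁻¹).im ≤ -(1/(10*r)) ∧
    ‖(1 - Complex.exp (ψ * Complex.I))⁻¹‖ ≤ (2 * Real.sin (r/2))⁻¹ := by
  have h := kernel_bounds hr0 hr (show r < -ψ by linarith) (show -ψ < 5*r by linarith)
  have hconj : (1 - Complex.exp (ψ * Complex.I)) =
      conj (1 - Complex.exp ((↑(-ψ) : ℂ) * Complex.I)) := by
    rw [map_sub, map_one, ← Complex.exp_conj, map_mul, Complex.conj_ofReal, Complex.conj_I]
    push_cast
    ring_nf
  constructor
  · rw [hconj, ← map_inv₀, Complex.conj_im]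
    have := h.1
    push_cast at this ⊢
    linarith
  · rw [hconj, ← map_inv₀, Complex.norm_conj]
    exact_mod_cast h.2

lemma main_est (r : ℝ) (hr0 : 0 < r) (hr : r < 2/5)
    (p q : ℂ) (hp : p ∈ Metric.sphere (0:ℂ) 1) (hq : q ∈ Metric.sphere (0:ℂ) 1)
    (hpq : circArg q - circArg p = 3*r ∨ circArg p - circArg q = 3*r)
    (f : ℂ → ℝ) (hf : Integrable f circleMeasure) (hf0 : ∀ x, 0 ≤ f x)
    (hsupp : Function.support f ⊆ arcBall p r)
    (z : ℂ) (hz : z ∈ arcBall q r) :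
    1 / (28 * Real.pi) *
        ((circleMeasure (arcBall p r)).toReal⁻¹ * ∫ w in arcBall p r, f w ∂circleMeasure) ≤
      ‖szegoKernelInt f z‖ := by
  have hpi : (3:ℝ) < Real.pi := Real.pi_gt_three
  set σ : ℝ := if circArg q - circArg p = 3*r then 1 else -1 with hσ
  have hker : ∀ w ∈ arcBall p r,
      1/(10*r) ≤ σ * ((1 - conj w * z)⁻¹).im ∧
      ‖(1 - conj w * z)⁻¹‖ ≤ (2 * Real.sin (r/2))⁻¹ := by
    intro w hw
    have hwS : w ∈ Metric.sphere (0:ℂ) 1 := hw.1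
    have hzS : z ∈ Metric.sphere (0:ℂ) 1 := hz.1
    set ψ : ℝ := circArg z - circArg w with hψ
    have hwz : conj w * z = Complex.exp (ψ * Complex.I) := by
      conv_lhs => rw [← exp_circArg hwS, ← exp_circArg hzS]
      rw [← Complex.exp_conj, map_mul, Complex.conj_ofReal, Complex.conj_I, ← Complex.exp_add]
      congr 1
      push_cast [hψ]
      ring
    rw [hwz]
    have hw' : |circArg w - circArg p| < r := hw.2
    have hz' : |circArg z - circArg q| < r := hz.2
    rw [abs_lt] at hw' hz'
    rcases hpq with hcase | hcase
    · have hσ1 : σ = 1 := if_pos hcase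
      have hψ1 : r < ψ := by rw [hψ]; linarith [hw'.1, hw'.2, hz'.1, hz'.2]
      have hψ2 : ψ < 5*r := by rw [hψ]; linarith [hw'.1, hw'.2, hz'.1, hz'.2]
      have hkb := kernel_bounds hr0 hr hψ1 hψ2
      rw [hσ1]
      simpa using hkb
    · have hσ1 : σ = -1 := by
        rw [hσ, if_neg]
        intro hcon
        linarith
      have hψ1 : -(5*r) < ψ := by rw [hψ]; linarith [hw'.1, hw'.2, hz'.1, hz'.2]
      have hψ2 : ψ < -r := by rw [hψ]; linarith [hw'.1, hw'.2, hz'.1, hz'.2]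
      have hkb := kernel_bounds_neg hr0 hr hψ1 hψ2
      rw [hσ1]
      exact ⟨by linarith [hkb.1], hkb.2⟩
  set K : ℂ → ℂ := fun w => (f w : ℂ) / (1 - conj w * z) with hK
  have hKmeas : AEStronglyMeasurable K circleMeasure := by
    have h1 : AEStronglyMeasurable (fun w => (f w : ℂ)) circleMeasure :=
      Complex.continuous_ofReal.comp_aestronglyMeasurable hf.aestronglyMeasurable
    have h2 : Measurable fun w : ℂ => (1 - conj w * z)⁻¹ :=
      ((continuous_const.sub (Complex.continuous_conj.mul continuous_const)).measurable).inv
    simpa [hK, div_eq_mul_inv, Pi.mul_def] using h1.mul h2.aestronglyMeasurable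
  have hbound : ∀ w, ‖K w‖ ≤ (2 * Real.sin (r/2))⁻¹ * f w := by
    intro w
    by_cases hfw : f w = 0
    · simp [hK, hfw]
    · have hwA : w ∈ arcBall p r := hsupp hfw
      have hk2 := (hker w hwA).2
      calc ‖K w‖ = |f w| * ‖(1 - conj w * z)⁻¹‖ := by
            rw [hK]
            simp only [div_eq_mul_inv, norm_mul, Complex.norm_real, Real.norm_eq_abs]
        _ = f w * ‖(1 - conj w * z)⁻¹‖ := by rw [abs_of_nonneg (hf0 w)]
        _ ≤ f w * (2 * Real.sin (r/2))⁻¹ := mul_le_mul_of_nonneg_left hk2 (hf0 w)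
        _ = (2 * Real.sin (r/2))⁻¹ * f w := by ring
  have hKint : Integrable K circleMeasure :=
    Integrable.mono' (hf.const_mul _) hKmeas (ae_of_all _ hbound)
  have h_im : ∀ w, 1/(10*r) * f w ≤ σ * (K w).im := by
    intro w
    by_cases hfw : f w = 0
    · simp [hK, hfw]
    · have hwA : w ∈ arcBall p r := hsupp hfw
      have hk := (hker w hwA).1
      have him : (K w).im = f w * ((1 - conj w * z)⁻¹).im := by
        rw [hK]
        simp [div_eq_mul_inv, Complex.mul_im]
      rw [him]
      calc 1/(10*r) * f w = f w * (1/(10*r)) := by ring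
        _ ≤ f w * (σ * ((1 - conj w * z)⁻¹).im) := mul_le_mul_of_nonneg_left hk (hf0 w)
        _ = σ * (f w * ((1 - conj w * z)⁻¹).im) := by ring
  have hSim : (szegoKernelInt f z).im = ∫ w, (K w).im ∂circleMeasure := by
    unfold szegoKernelInt
    exact (integral_im hKint).symm
  have hlow : 1/(10*r) * ∫ w, f w ∂circleMeasure ≤ σ * (szegoKernelInt f z).im := by
    rw [hSim, ← integral_const_mul, ← integral_const_mul]
    exact integral_mono (hf.const_mul _) ((hKint.im).const_mul σ) h_im
  have hσcases : σ = 1 ∨ σ = -1 := by rw [hσ]; split_ifs <;> simp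
  have habs1 : σ * (szegoKernelInt f z).im ≤ ‖szegoKernelInt f z‖ := by
    have h1 : |(szegoKernelInt f z).im| ≤ ‖szegoKernelInt f z‖ :=
      Complex.abs_im_le_norm _
    have h2 : σ * (szegoKernelInt f z).im ≤ |(szegoKernelInt f z).im| := by
      rcases hσcases with h | h <;> rw [h] <;>
        simp [le_abs_self, neg_le_abs, neg_abs_le]
    linarith
  have hball : arcBall p r = arcBall (Complex.exp (circArg p * Complex.I)) r := by
    rw [exp_circArg hp]
  have hμge : ENNReal.ofReal ((2 * Real.pi)⁻¹ * r) ≤ circleMeasure (arcBall p r) := by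
    rw [hball]
    exact circleMeasure_arcBall_ge (circArg_mem p) hr0 (by linarith)
  have hfin : circleMeasure (arcBall p r) ≠ ⊤ :=
    ne_top_of_le_ne_top ENNReal.one_ne_top (circleMeasure_le_one _)
  have hto : (2 * Real.pi)⁻¹ * r ≤ (circleMeasure (arcBall p r)).toReal :=
    (ENNReal.ofReal_le_iff_le_toReal hfin).mp hμge
  have hposc : (0:ℝ) < (2 * Real.pi)⁻¹ * r := by positivity
  have hinv : (circleMeasure (arcBall p r)).toReal⁻¹ ≤ ((2 * Real.pi)⁻¹ * r)⁻¹ := by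
    gcongr
  have hIA : ∫ w in arcBall p r, f w ∂circleMeasure ≤ ∫ w, f w ∂circleMeasure :=
    setIntegral_le_integral hf (ae_of_all _ hf0)
  have hIA0 : 0 ≤ ∫ w in arcBall p r, f w ∂circleMeasure :=
    setIntegral_nonneg (measurableSet_arcBall _ _) fun x _ => hf0 x
  have hI0 : 0 ≤ ∫ w, f w ∂circleMeasure := integral_nonneg hf0
  have hinveq : ((2 * Real.pi)⁻¹ * r)⁻¹ = 2 * Real.pi / r := by
    field_simp
  calc 1 / (28 * Real.pi) *
        ((circleMeasure (arcBall p r)).toReal⁻¹ * ∫ w in arcBall p r, f w ∂circleMeasure)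
      ≤ 1 / (28 * Real.pi) * ((2 * Real.pi / r) * ∫ w, f w ∂circleMeasure) := by
        apply mul_le_mul_of_nonneg_left ?_ (by positivity)
        rw [← hinveq]
        exact mul_le_mul hinv hIA hIA0 (le_of_lt (by positivity))
    _ = 1 / (14 * r) * ∫ w, f w ∂circleMeasure := by
        field_simp
        ring
    _ ≤ 1 / (10 * r) * ∫ w, f w ∂circleMeasure := by
        apply mul_le_mul_of_nonneg_right ?_ hI0
        apply one_div_le_one_div_of_le (by positivity) (by linarith)
    _ ≤ σ * (szegoKernelInt f z).im := hlow
    _ ≤ ‖szegoKernelInt f z‖ := habs1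

/-- Suppose `0 < r < 2/5`. If `I₁ = I(p₁, r)` is an arc centered at
`p₁ ∈ ∂𝔻`, then there is a point `p₂ ∈ ∂𝔻` and a disjoint arc `I₂ = I(p₂, r)` so that for
`j ∈ {1,2}`, any `f > 0` supported in `I_j` and any `z ∈ I_k` with `k ≠ j`,
`|S₀ f (z)| ≥ (1/(28π)) ⨍_{I_j} f d θ̃`. -/
theorem szego_ball_separation
    (r : ℝ) (hr0 : 0 < r) (hr : r < 2 / 5)
    (p₁ : ℂ) (hp₁ : p₁ ∈ Metric.sphere (0 : ℂ) 1) :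
    ∃ p₂ ∈ Metric.sphere (0 : ℂ) 1,
      Disjoint (arcBall p₁ r) (arcBall p₂ r) ∧
      (∀ f : ℂ → ℝ, Integrable f circleMeasure → (∀ x, 0 ≤ f x) →
        Function.support f ⊆ arcBall p₁ r →
        ∀ z ∈ arcBall p₂ r,
          1 / (28 * Real.pi) *
              ((circleMeasure (arcBall p₁ r)).toReal⁻¹ *
                ∫ w in arcBall p₁ r, f w ∂circleMeasure) ≤
            ‖szegoKernelInt f z‖) ∧
      (∀ f : ℂ → ℝ, Integrable f circleMeasure → (∀ x, 0 ≤ f x) →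
        Function.support f ⊆ arcBall p₂ r →
        ∀ z ∈ arcBall p₁ r,
          1 / (28 * Real.pi) *
              ((circleMeasure (arcBall p₂ r)).toReal⁻¹ *
                ∫ w in arcBall p₂ r, f w ∂circleMeasure) ≤
            ‖szegoKernelInt f z‖) := by
  have hpi : (3:ℝ) < Real.pi := Real.pi_gt_three
  have hθ₁mem := circArg_mem p₁
  set θ₁ := circArg p₁ with hθ₁
  set θ₂ : ℝ := if θ₁ + 3*r < 2*Real.pi then θ₁ + 3*r else θ₁ - 3*r with hθ₂
  have hθ₂mem : θ₂ ∈ Set.Ico 0 (2*Real.pi) := by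
    rw [hθ₂]
    split_ifs with h
    · exact ⟨by linarith [hθ₁mem.1], h⟩
    · push_neg at h
      exact ⟨by linarith [hθ₁mem.2], by linarith [hθ₁mem.2]⟩
  set p₂ : ℂ := Complex.exp (θ₂ * Complex.I) with hp₂
  have hp₂S : p₂ ∈ Metric.sphere (0:ℂ) 1 := exp_mem_sphere θ₂
  have hcθ₂ : circArg p₂ = θ₂ := circArg_exp hθ₂mem
  have hdiff : θ₂ - θ₁ = 3*r ∨ θ₁ - θ₂ = 3*r := by
    rw [hθ₂]
    split_ifs
    · left; ring
    · right; ring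
  refine ⟨p₂, hp₂S, ?_, ?_, ?_⟩
  · rw [Set.disjoint_left]
    intro ξ h1 h2
    have e1 : |circArg ξ - θ₁| < r := h1.2
    have e2 : |circArg ξ - θ₂| < r := by
      have h2' := h2.2
      unfold arcDist at h2'
      rwa [hcθ₂] at h2'
    rw [abs_lt] at e1 e2
    rcases hdiff with h | h <;> linarith [e1.1, e1.2, e2.1, e2.2]
  · intro f hf hf0 hsupp z hz
    exact main_est r hr0 hr p₁ p₂ hp₁ hp₂S
      (by rw [hcθ₂, ← hθ₁]; tauto) f hf hf0 hsupp z hz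
  · intro f hf hf0 hsupp z hz
    refine main_est r hr0 hr p₂ p₁ hp₂S hp₁ ?_ f hf hf0 hsupp z hz
    rw [hcθ₂, ← hθ₁]
    tauto
end
end
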